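/- If a Banach space Y is locally λ-complemented in X via embedding j, and Y₀ ⊆ Y, X₀ ⊆ X are complemented subspaces (with projections of norms μ_Y, μ_X respectively) such that j(Y₀) ⊆ X₀, then Y₀ is locally complemented in X₀ (with constant at most λ·μ_Y, via the restricted embedding). -/

import Mathlib

/-- If `Y` is locally `λ`-complemented in `X` via `j`, and `Y₀ ⊆ Y`, `X₀ ⊆ X` are
complemented subspaces (via projections `p_Y`, `p_X`) with `j(Y₀) ⊆ X₀`, then `Y₀` is
locally (`λ·μ_Y`)-complemented in `X₀` via the restricted embedding. -/
theorem locally_complemented_restriction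
    {Y X : Type*} [NormedAddCommGroup Y] [NormedSpace ℝ Y] [CompleteSpace Y]
    [NormedAddCommGroup X] [NormedSpace ℝ X] [CompleteSpace X]
    (j : Y →L[ℝ] X) (hj : ∀ y, ‖j y‖ = ‖y‖) (lam : ℝ)
    (hloc : ∀ F : Submodule ℝ X, FiniteDimensional ℝ F →
        ∃ r : F →L[ℝ] Y, ‖r‖ ≤ lam ∧ ∀ (y : Y) (h : j y ∈ F), r ⟨j y, h⟩ = y)
    (Y₀ : Submodule ℝ Y) (X₀ : Submodule ℝ X)
    (pY : Y →L[ℝ] Y) (muY : ℝ) (hpY_range : LinearMap.range (pY : Y →ₗ[ℝ] Y) = Y₀)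
    (hpY_id : ∀ y ∈ Y₀, pY y = y) (hpY_norm : ‖pY‖ = muY)
    (pX : X →L[ℝ] X) (hpX_range : LinearMap.range (pX : X →ₗ[ℝ] X) = X₀)
    (hpX_id : ∀ x ∈ X₀, pX x = x)
    (hsub : ∀ y : Y, y ∈ Y₀ → j y ∈ X₀) :
    ∀ F : Submodule ℝ X₀, FiniteDimensional ℝ F →
      ∃ r : F →L[ℝ] Y₀, ‖r‖ ≤ lam * muY ∧
        ∀ (y : Y₀) (h : (⟨j y, hsub y y.2⟩ : X₀) ∈ F),
          r ⟨⟨j y, hsub y y.2⟩, h⟩ = y := by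
  intro F hF
  -- image of F in X
  set F' : Submodule ℝ X := F.map X₀.subtype with hF'
  haveI : FiniteDimensional ℝ F' := by
    exact Module.Finite.map F X₀.subtype
  obtain ⟨r', hr'_norm, hr'_id⟩ := hloc F' inferInstance
  have hlam : 0 ≤ lam := le_trans (norm_nonneg r') hr'_norm
  have hmuY : 0 ≤ muY := hpY_norm ▸ norm_nonneg pY
  -- inclusion F → F'
  have hmem : ∀ x : F, (x : X₀).1 ∈ F' := fun x =>
    Submodule.mem_map.mpr ⟨x.1, x.2, rfl⟩
  let ι : F →L[ℝ] F' :=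
    { toFun := fun x => ⟨(x : X₀).1, hmem x⟩
      map_add' := fun a b => rfl
      map_smul' := fun c a => rfl
      cont := by
        apply Continuous.subtype_mk
        exact continuous_subtype_val.comp continuous_subtype_val }
  have hι : ∀ x : F, ‖ι x‖ = ‖x‖ := fun x => rfl
  -- the composite map, corestricted to Y₀
  have hrange : ∀ x : F, pY (r' (ι x)) ∈ Y₀ := fun x =>
    hpY_range ▸ LinearMap.mem_range_self _ _
  refine ⟨ContinuousLinearMap.codRestrict ((pY.comp r').comp ι) Y₀ hrange, ?_, ?_⟩
  · apply ContinuousLinearMap.opNorm_le_bound _ (mul_nonneg hlam hmuY)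
    intro x
    have h1 : ‖(ContinuousLinearMap.codRestrict ((pY.comp r').comp ι) Y₀ hrange) x‖
        = ‖pY (r' (ι x))‖ := rfl
    rw [h1]
    calc ‖pY (r' (ι x))‖ ≤ ‖pY‖ * ‖r' (ι x)‖ := pY.le_opNorm _
      _ ≤ ‖pY‖ * (‖r'‖ * ‖ι x‖) := by
          apply mul_le_mul_of_nonneg_left (r'.le_opNorm _) (norm_nonneg pY)
      _ = ‖pY‖ * ‖r'‖ * ‖x‖ := by rw [hι]; ring
      _ ≤ muY * lam * ‖x‖ := by
          apply mul_le_mul_of_nonneg_right _ (norm_nonneg x)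
          rw [hpY_norm]
          exact mul_le_mul_of_nonneg_left hr'_norm hmuY
      _ = lam * muY * ‖x‖ := by ring
  · intro y h
    apply Subtype.ext
    have hmem' : j (y : Y) ∈ F' := hmem ⟨⟨j y, hsub y y.2⟩, h⟩
    have h2 : (ι ⟨⟨j y, hsub y y.2⟩, h⟩ : F') = ⟨j (y : Y), hmem'⟩ := rfl
    have h3 : r' ⟨j (y : Y), hmem'⟩ = (y : Y) := hr'_id _ _
    show pY (r' (ι ⟨⟨j y, hsub y y.2⟩, h⟩)) = (y : Y)
    rw [h2, h3]
    exact hpY_id _ y.2
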